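/- Let E = (ε_1,…,ε_n) ∈ ℝ^{p×n} be a random matrix whose columns ε_i are independent SG_p(σ²) random vectors. Then for every t ≥ 2, P( ‖E‖ ≥ 4tσ(√n + √p) ) ≤ exp( −(t² − 3)n/2 ), where ‖E‖ is the operator (spectral) norm. -/

import Mathlib

open Matrix MeasureTheory ProbabilityTheory
open scoped BigOperators ENNReal NNReal

open Metric
open scoped RealInnerProductSpace
set_option maxHeartbeats 1000000
noncomputable section

/-- Euclidean norm of a vector in `Fin p → ℝ`. -/
def vnorm {p : ℕ} (x : Fin p → ℝ) : ℝ := Real.sqrt (∑ i, (x i) ^ 2)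

/-- Frobenius norm of a real matrix. -/
def fnorm {m n : ℕ} (A : Matrix (Fin m) (Fin n) ℝ) : ℝ :=
  Real.sqrt (∑ i, ∑ j, (A i j) ^ 2)

/-- Operator (spectral) norm of a real matrix. -/
def opnorm {m n : ℕ} (A : Matrix (Fin m) (Fin n) ℝ) : ℝ :=
  ‖LinearMap.toContinuousLinearMap (Matrix.toEuclideanLin A)‖

/-- A (full) singular value decomposition of a real `p × n` matrix `A`:
`A = U D Vᵀ` with `U, V` orthogonal and `D` the rectangular diagonal matrix with the
nonincreasing nonnegative singular values `sv 0 ≥ sv 1 ≥ ⋯` on the diagonal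
(0-indexed, so the math `σ_i` is `sv (i-1)`), extended by zero beyond `min p n`. -/
structure SVDData (p n : ℕ) (A : Matrix (Fin p) (Fin n) ℝ) where
  U : Matrix (Fin p) (Fin p) ℝ
  V : Matrix (Fin n) (Fin n) ℝ
  sv : ℕ → ℝ
  hU : Uᵀ * U = 1
  hV : Vᵀ * V = 1
  sv_anti : ∀ i j : ℕ, i ≤ j → sv j ≤ sv i
  sv_nonneg : ∀ i, 0 ≤ sv i
  sv_zero : ∀ j, min p n ≤ j → sv j = 0
  decomp : A = U * (Matrix.of fun (i : Fin p) (j : Fin n) => if (i : ℕ) = (j : ℕ) then sv (i : ℕ) else 0) * Vᵀ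

/-- Projection matrix `U_{1:r} U_{1:r}ᵀ` onto the span of the first `r` columns of `U`. -/
def projr {p : ℕ} (U : Matrix (Fin p) (Fin p) ℝ) (r : ℕ) : Matrix (Fin p) (Fin p) ℝ :=
  Matrix.of fun i j => ∑ l : Fin p, if (l : ℕ) < r then U i l * U j l else 0

/-- The `l`-th (0-indexed) column of a matrix, as a vector. -/
def matCol {p q : ℕ} (U : Matrix (Fin p) (Fin q) ℝ) (l : ℕ) : Fin p → ℝ :=
  fun i => if h : l < q then U i ⟨l, h⟩ else 0

/-- `β` for a cluster assignment: `(k/n) ·` (size of the smallest cluster),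
so that `β·n/k` is the size of the smallest cluster. -/
def betaMin (n k : ℕ) (z : Fin n → Fin k) : ℝ :=
  ((k : ℝ) / n) * ⨅ a : Fin k, ((Finset.univ.filter fun i => z i = a).card : ℝ)

/-- Minimum pairwise distance between the centers. -/
def Delta {p k : ℕ} (θ : Fin k → Fin p → ℝ) : ℝ :=
  ⨅ q : {q : Fin k × Fin k // q.1 ≠ q.2}, vnorm (fun i => θ q.1.1 i - θ q.1.2 i)

/-- Misclustering error `ℓ(z, z*)`. -/
def miscl {n k : ℕ} (z zs : Fin n → Fin k) : ℝ :=
  (⨅ φ : Equiv.Perm (Fin k), ((Finset.univ.filter fun i => z i ≠ φ (zs i)).card : ℝ)) / n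

/-- `(z, c)` is a global minimizer of the k-means objective for the columns of `W * X`. -/
def IsKMeans {p n k : ℕ} (W : Matrix (Fin p) (Fin p) ℝ) (X : Matrix (Fin p) (Fin n) ℝ)
    (z : Fin n → Fin k) (c : Fin k → Fin p → ℝ) : Prop :=
  ∀ (z' : Fin n → Fin k) (c' : Fin k → Fin p → ℝ),
    ∑ i, ∑ a, (W.mulVec (fun b => X b i) a - c (z i) a) ^ 2 ≤
      ∑ i, ∑ a, (W.mulVec (fun b => X b i) a - c' (z' i) a) ^ 2

/-- Scalar sub-Gaussian with variance proxy `σ2`: the moment generating function of `X`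
exists and satisfies `E exp(tX) ≤ exp(σ2 t²/2)` for all `t`. -/
def IsSG {Ω : Type*} [MeasurableSpace Ω] (μ : Measure Ω) (X : Ω → ℝ) (σ2 : ℝ) : Prop :=
  ∀ t : ℝ, Integrable (fun ω => Real.exp (t * X ω)) μ ∧
    ∫ ω, Real.exp (t * X ω) ∂μ ≤ Real.exp (σ2 * t ^ 2 / 2)

/-- Vector sub-Gaussian with variance proxy `σ2`: every unit-vector projection is `SG(σ2)`. -/
def IsSGVec {Ω : Type*} [MeasurableSpace Ω] (μ : Measure Ω) {p : ℕ}
    (X : Ω → Fin p → ℝ) (σ2 : ℝ) : Prop :=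
  ∀ u : Fin p → ℝ, vnorm u = 1 → IsSG μ (fun ω => ∑ i, u i * X ω i) σ2


lemma chernoff {Ω : Type} [MeasurableSpace Ω] (μ : Measure Ω) [IsProbabilityMeasure μ]
    {n p : ℕ} (σ : ℝ) (hσ : 0 < σ) (ε : Fin n → Ω → Fin p → ℝ)
    (hmeas : ∀ i, Measurable (ε i))
    (hindep : iIndepFun ε μ)
    (hsg : ∀ i, IsSGVec μ (ε i) (σ ^ 2))
    (u : Fin p → ℝ) (hu : vnorm u = 1) (v : Fin n → ℝ) (hv : ∑ i, v i ^ 2 = 1)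
    (s : ℝ) (hs : 0 ≤ s) :
    μ {ω | s ≤ ∑ i, v i * ∑ a, u a * ε i ω a} ≤
      ENNReal.ofReal (Real.exp (-(s ^ 2 / (2 * σ ^ 2)))) := by
  classical
  set Y : Fin n → Ω → ℝ := fun i ω => v i * ∑ a, u a * ε i ω a with hY
  have hg : ∀ i, Measurable (fun x : Fin p → ℝ => v i * ∑ a, u a * x a) := fun i =>
    (Finset.measurable_sum Finset.univ fun a _ =>
      (measurable_pi_apply (X := fun _ : Fin p => ℝ) a).const_mul (u a)).const_mul (v i)
  have hYmeas : ∀ i, Measurable (Y i) := fun i => (hg i).comp (hmeas i)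
  have hYindep : iIndepFun Y μ :=
    hindep.comp (fun i x => v i * ∑ a, u a * x a) hg
  set lam : ℝ := s / σ ^ 2 with hlam
  have hσ2 : (0:ℝ) < σ ^ 2 := by positivity
  have hlam0 : 0 ≤ lam := div_nonneg hs hσ2.le
  have hrw : ∀ i, (fun ω => Real.exp (lam * Y i ω)) =
      fun ω => Real.exp ((lam * v i) * ∑ a, u a * ε i ω a) := by
    intro i; funext ω; rw [hY]; ring_nf
  have hint : ∀ i, Integrable (fun ω => Real.exp (lam * Y i ω)) μ := by
    intro i; rw [hrw i]; exact (hsg i u hu (lam * v i)).1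
  have hmgf : ∀ i, mgf (Y i) μ lam ≤ Real.exp (σ ^ 2 * (lam * v i) ^ 2 / 2) := by
    intro i
    have := (hsg i u hu (lam * v i)).2
    rw [mgf]
    calc ∫ ω, Real.exp (lam * Y i ω) ∂μ
        = ∫ ω, Real.exp ((lam * v i) * ∑ a, u a * ε i ω a) ∂μ := by rw [hrw i]
      _ ≤ _ := this
  set X : Ω → ℝ := ∑ i ∈ Finset.univ, Y i with hX
  have h_int : Integrable (fun ω => Real.exp (lam * X ω)) μ :=
    hYindep.integrable_exp_mul_sum hYmeas (fun i _ => hint i)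
  have chern := measure_ge_le_exp_mul_mgf (μ := μ) (X := X) s hlam0 h_int
  have hprod : mgf X μ lam = ∏ i, mgf (Y i) μ lam := hYindep.mgf_sum hYmeas Finset.univ
  have hprodle : mgf X μ lam ≤ Real.exp (σ ^ 2 * lam ^ 2 / 2) := by
    rw [hprod]
    calc ∏ i, mgf (Y i) μ lam ≤ ∏ i, Real.exp (σ ^ 2 * (lam * v i) ^ 2 / 2) :=
          Finset.prod_le_prod (fun i _ => mgf_nonneg) (fun i _ => hmgf i)
      _ = Real.exp (∑ i, σ ^ 2 * (lam * v i) ^ 2 / 2) := (Real.exp_sum _ _).symm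
      _ = Real.exp (σ ^ 2 * lam ^ 2 / 2) := by
          congr 1
          have : ∀ i, σ ^ 2 * (lam * v i) ^ 2 / 2 = (σ ^ 2 * lam ^ 2 / 2) * v i ^ 2 := by
            intro i; ring
          rw [Finset.sum_congr rfl (fun i _ => this i), ← Finset.mul_sum, hv, mul_one]
  have hreal : (μ {ω | s ≤ X ω}).toReal ≤ Real.exp (-(s ^ 2 / (2 * σ ^ 2))) := by
    refine chern.trans ?_
    calc Real.exp (-lam * s) * mgf X μ lam
        ≤ Real.exp (-lam * s) * Real.exp (σ ^ 2 * lam ^ 2 / 2) := by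
          exact mul_le_mul_of_nonneg_left hprodle (Real.exp_nonneg _)
      _ = Real.exp (-lam * s + σ ^ 2 * lam ^ 2 / 2) := (Real.exp_add _ _).symm
      _ = Real.exp (-(s ^ 2 / (2 * σ ^ 2))) := by
          congr 1
          rw [hlam]; field_simp; ring
  have hset : {ω | s ≤ ∑ i, v i * ∑ a, u a * ε i ω a} = {ω | s ≤ X ω} := by
    ext ω; simp [hX, Finset.sum_apply, hY]
  rw [hset, ← ENNReal.ofReal_toReal (measure_ne_top μ _)]
  exact ENNReal.ofReal_le_ofReal hreal

noncomputable section

lemma sep_card_le (d : ℕ) (N : Finset (EuclideanSpace ℝ (Fin d)))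
    (h1 : ∀ x ∈ N, ‖x‖ = 1)
    (hsep : ∀ x ∈ N, ∀ y ∈ N, x ≠ y → 1/4 < dist x y) :
    N.card ≤ 9 ^ d := by
  set v : ℝ≥0∞ := volume (ball (0 : EuclideanSpace ℝ (Fin d)) 1) with hv
  have hdisj : (N : Set (EuclideanSpace ℝ (Fin d))).PairwiseDisjoint (fun x => ball x (1/8)) := by
    intro x hx y hy hxy
    exact ball_disjoint_ball (by linarith [hsep x hx y hy hxy])
  have hsub : (⋃ x ∈ N, ball x (1/8)) ⊆ ball (0 : EuclideanSpace ℝ (Fin d)) (9/8) := by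
    intro z hz
    simp only [Set.mem_iUnion] at hz
    obtain ⟨x, hx, hzx⟩ := hz
    have : dist z x < 1/8 := hzx
    have hx1 : ‖x‖ = 1 := h1 x hx
    have : dist z 0 ≤ dist z x + dist x 0 := dist_triangle _ _ _
    simp only [dist_zero_right] at *
    rw [mem_ball, dist_zero_right]
    linarith
  have hmeas : volume (⋃ x ∈ N, ball x (1/8)) = ∑ x ∈ N, volume (ball x (1/8)) :=
    measure_biUnion_finset hdisj (fun x _ => measurableSet_ball)
  have hballx : ∀ x : EuclideanSpace ℝ (Fin d), volume (ball x (1/8)) = ENNReal.ofReal ((1/8 : ℝ) ^ d) * v := by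
    intro x
    rw [Measure.addHaar_ball_of_pos volume x (by norm_num : (0:ℝ) < 1/8), finrank_euclideanSpace_fin]
  have hbig : volume (ball (0 : EuclideanSpace ℝ (Fin d)) (9/8)) = ENNReal.ofReal ((9/8 : ℝ) ^ d) * v := by
    rw [Measure.addHaar_ball_of_pos volume _ (by norm_num : (0:ℝ) < 9/8), finrank_euclideanSpace_fin]
  have key : (N.card : ℝ≥0∞) * (ENNReal.ofReal ((1/8 : ℝ) ^ d) * v) ≤
      ENNReal.ofReal ((9/8 : ℝ) ^ d) * v := by
    calc (N.card : ℝ≥0∞) * (ENNReal.ofReal ((1/8 : ℝ) ^ d) * v)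
        = ∑ x ∈ N, volume (ball x (1/8)) := by
          rw [Finset.sum_congr rfl (fun x _ => hballx x), Finset.sum_const, nsmul_eq_mul]
      _ = volume (⋃ x ∈ N, ball x (1/8)) := hmeas.symm
      _ ≤ volume (ball (0 : EuclideanSpace ℝ (Fin d)) (9/8)) := measure_mono hsub
      _ = _ := hbig
  have hv0 : v ≠ 0 := (measure_ball_pos volume _ (by norm_num : (0:ℝ) < 1)).ne'
  have hvt : v ≠ ⊤ := measure_ball_lt_top.ne
  rw [← mul_assoc] at key
  have key2 : (N.card : ℝ≥0∞) * ENNReal.ofReal ((1/8 : ℝ) ^ d) ≤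
      ENNReal.ofReal ((9/8 : ℝ) ^ d) := by
    exact (ENNReal.mul_le_mul_iff_left hv0 hvt).mp key
  have h8 : (0:ℝ) < (1/8 : ℝ) ^ d := by positivity
  have key3 : (N.card : ℝ) * (1/8 : ℝ) ^ d ≤ (9/8 : ℝ) ^ d := by
    have := ENNReal.toReal_mono (by simp) key2
    rwa [ENNReal.toReal_mul, ENNReal.toReal_natCast, ENNReal.toReal_ofReal h8.le,
      ENNReal.toReal_ofReal (by positivity)] at this
  have : (N.card : ℝ) ≤ 9 ^ d := by
    have h9 : ((9:ℝ)/8) ^ d = 9 ^ d * (1/8) ^ d := by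
      rw [← mul_pow]; norm_num
    rw [h9] at key3
    exact le_of_mul_le_mul_right key3 h8
  have h9 : ((9:ℕ) ^ d : ℝ) = (9:ℝ) ^ d := by push_cast; ring
  exact_mod_cast this.trans_eq h9.symm

lemma exists_net (d : ℕ) :
    ∃ N : Finset (EuclideanSpace ℝ (Fin d)),
      (∀ x ∈ N, ‖x‖ = 1) ∧ (N.card ≤ 9 ^ d) ∧
      ∀ x : EuclideanSpace ℝ (Fin d), ‖x‖ = 1 → ∃ y ∈ N, ‖x - y‖ ≤ 1/4 := by
  classical
  set E := EuclideanSpace ℝ (Fin d)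
  set Sep : Finset (EuclideanSpace ℝ (Fin d)) → Prop := fun N =>
    (∀ x ∈ N, ‖x‖ = 1) ∧ ∀ x ∈ N, ∀ y ∈ N, x ≠ y → 1/4 < dist x y with hSep
  set S : Set ℕ := {c | ∃ N : Finset (EuclideanSpace ℝ (Fin d)), Sep N ∧ N.card = c} with hS
  have hbdd : BddAbove S := by
    refine ⟨9 ^ d, fun c hc => ?_⟩
    obtain ⟨N, hN, rfl⟩ := hc
    exact sep_card_le d N hN.1 hN.2
  have h0 : 0 ∈ S := ⟨∅, ⟨by simp, by simp⟩, rfl⟩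
  obtain ⟨N, hN, hcard⟩ := Nat.sSup_mem ⟨0, h0⟩ hbdd
  refine ⟨N, hN.1, ?_, ?_⟩
  · rw [hcard]
    exact csSup_le ⟨0, h0⟩ (fun c hc => by
      obtain ⟨N', hN', rfl⟩ := hc; exact sep_card_le d N' hN'.1 hN'.2)
  · intro x hx
    by_contra hcon
    push_neg at hcon
    have hxN : x ∉ N := fun hxN => by
      have := hcon x hxN
      simp only [sub_self, norm_zero] at this
      linarith
    have hSep' : Sep (insert x N) := by
      constructor
      · intro y hy
        rcases Finset.mem_insert.mp hy with rfl | hy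
        · exact hx
        · exact hN.1 y hy
      · intro a ha b hb hab
        rcases Finset.mem_insert.mp ha with ha' | ha' <;>
          rcases Finset.mem_insert.mp hb with hb' | hb'
        · exact absurd (ha'.trans hb'.symm) hab
        · subst ha'; rw [dist_eq_norm]; exact hcon b hb'
        · subst hb'; rw [dist_comm, dist_eq_norm]; exact hcon a ha'
        · exact hN.2 a ha' b hb' hab
    have : N.card + 1 ∈ S := ⟨insert x N, hSep', Finset.card_insert_of_notMem hxN⟩
    have := le_csSup hbdd this
    omega



lemma inner_toEuc {p n : ℕ} (A : Matrix (Fin p) (Fin n) ℝ)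
    (u : EuclideanSpace ℝ (Fin p)) (v : EuclideanSpace ℝ (Fin n)) :
    ⟪u, (Matrix.toEuclideanLin A) v⟫ = ∑ i : Fin n, v i * ∑ a : Fin p, u a * A a i := by
  rw [PiLp.inner_apply]
  simp only [Matrix.toEuclideanLin_apply, RCLike.inner_apply, conj_trivial]
  have : ∀ a : Fin p, (A *ᵥ v.ofLp) a
      = ∑ i : Fin n, A a i * v i := by
    intro a; rfl
  simp only [this]
  simp_rw [Finset.mul_sum]
  rw [Finset.sum_comm]
  exact Finset.sum_congr rfl (fun i _ => by rw [Finset.sum_mul]; exact Finset.sum_congr rfl (fun a _ => by ring))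

lemma opnorm_net {p n : ℕ} (hp : 0 < p) (hn : 0 < n) (A : Matrix (Fin p) (Fin n) ℝ)
    (N : Finset (EuclideanSpace ℝ (Fin p))) (M : Finset (EuclideanSpace ℝ (Fin n)))
    (hN1 : ∀ x ∈ N, ‖x‖ = 1) (hM1 : ∀ x ∈ M, ‖x‖ = 1)
    (hN : ∀ x : EuclideanSpace ℝ (Fin p), ‖x‖ = 1 → ∃ y ∈ N, ‖x - y‖ ≤ 1/4)
    (hM : ∀ x : EuclideanSpace ℝ (Fin n), ‖x‖ = 1 → ∃ y ∈ M, ‖x - y‖ ≤ 1/4) :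
    ∃ u ∈ N, ∃ v ∈ M, opnorm A ≤ 2 * ⟪u, (Matrix.toEuclideanLin A) v⟫ := by
  classical
  set L := LinearMap.toContinuousLinearMap (Matrix.toEuclideanLin A) with hL
  haveI hntp : Nontrivial (EuclideanSpace ℝ (Fin p)) := by
    have : (0:ℕ) < Module.finrank ℝ (EuclideanSpace ℝ (Fin p)) := by
      rw [finrank_euclideanSpace_fin]; exact hp
    exact Module.nontrivial_of_finrank_pos this
  haveI hnt : Nontrivial (EuclideanSpace ℝ (Fin n)) := by
    have : (0:ℕ) < Module.finrank ℝ (EuclideanSpace ℝ (Fin n)) := by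
      rw [finrank_euclideanSpace_fin]; exact hn
    exact Module.nontrivial_of_finrank_pos this
  obtain ⟨x₁, hx₁⟩ := exists_norm_eq (EuclideanSpace ℝ (Fin n)) (zero_le_one)
  have hcomp : IsCompact (sphere (0 : EuclideanSpace ℝ (Fin n)) 1) := isCompact_sphere 0 1
  have hne : (sphere (0 : EuclideanSpace ℝ (Fin n)) 1).Nonempty :=
    ⟨x₁, by simpa [mem_sphere_iff_norm] using hx₁⟩
  obtain ⟨v₀, hv₀mem, hv₀max⟩ := hcomp.exists_isMaxOn hne
    ((continuous_norm.comp L.continuous).continuousOn)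
  have hv₀ : ‖v₀‖ = 1 := by simpa [mem_sphere_iff_norm] using hv₀mem
  have hLle : ‖L‖ ≤ ‖L v₀‖ := by
    refine L.opNorm_le_bound (norm_nonneg _) (fun x => ?_)
    rcases eq_or_ne x 0 with rfl | hx0
    · simp
    · have hxs : (‖x‖⁻¹ • x) ∈ sphere (0 : EuclideanSpace ℝ (Fin n)) 1 := by
        simp [norm_smul, norm_pos_iff.mpr hx0, inv_mul_cancel₀ (norm_ne_zero_iff.mpr hx0)]
      have hmem : ‖L (‖x‖⁻¹ • x)‖ ≤ ‖L v₀‖ := hv₀max hxs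
      rw [L.map_smul, norm_smul, norm_inv, norm_norm] at hmem
      have hxpos : 0 < ‖x‖ := norm_pos_iff.mpr hx0
      calc ‖L x‖ = ‖x‖ * (‖x‖⁻¹ * ‖L x‖) := by field_simp
        _ ≤ ‖x‖ * ‖L v₀‖ := mul_le_mul_of_nonneg_left hmem hxpos.le
        _ = ‖L v₀‖ * ‖x‖ := mul_comm _ _
  rcases eq_or_ne (L v₀) 0 with h0 | h0
  · -- degenerate: ‖L‖ = 0
    have hL0 : ‖L‖ ≤ 0 := by rw [h0] at hLle; simpa using hLle
    obtain ⟨x₂, hx₂⟩ := exists_norm_eq (EuclideanSpace ℝ (Fin p))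
      (zero_le_one)
    obtain ⟨u, huN, _⟩ := hN x₂ hx₂
    obtain ⟨v, hvM, _⟩ := hM x₁ hx₁
    refine ⟨u, huN, v, hvM, ?_⟩
    have h1 : |⟪u, (Matrix.toEuclideanLin A) v⟫| ≤ ‖u‖ * ‖L v‖ := by
      exact abs_real_inner_le_norm u (L v)
    have h2 : ‖L v‖ ≤ ‖L‖ * ‖v‖ := L.le_opNorm v
    have h3 : ‖L‖ = 0 := le_antisymm hL0 (norm_nonneg _)
    have h4 : ⟪u, (Matrix.toEuclideanLin A) v⟫ = 0 := by
      rw [h3, zero_mul] at h2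
      rw [hN1 u huN, one_mul] at h1
      exact abs_eq_zero.mp (le_antisymm (h1.trans h2) (abs_nonneg _))
    rw [opnorm, ← hL, h4]
    linarith
  · set u₀ : EuclideanSpace ℝ (Fin p) := ‖L v₀‖⁻¹ • (L v₀) with hu₀
    have hLv₀pos : 0 < ‖L v₀‖ := norm_pos_iff.mpr h0
    have hu₀n : ‖u₀‖ = 1 := by
      rw [hu₀, norm_smul, norm_inv, norm_norm, inv_mul_cancel₀ hLv₀pos.ne']
    obtain ⟨u, huN, huc⟩ := hN u₀ hu₀n
    obtain ⟨v, hvM, hvc⟩ := hM v₀ hv₀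
    refine ⟨u, huN, v, hvM, ?_⟩
    have hu1 : ‖u‖ = 1 := hN1 u huN
    have e1 : ⟪u₀, L v₀⟫ = ‖L v₀‖ := by
      rw [hu₀, real_inner_smul_left, real_inner_self_eq_norm_sq, sq,
        ← mul_assoc, inv_mul_cancel₀ hLv₀pos.ne', one_mul]
    have split : ⟪u, L v⟫ = ⟪u₀, L v₀⟫ + ⟪u - u₀, L v₀⟫ + ⟪u, L (v - v₀)⟫ := by
      rw [inner_sub_left, map_sub, inner_sub_right]
      ring
    have b1 : |⟪u - u₀, L v₀⟫| ≤ (1/4) * ‖L‖ := by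
      have h := abs_real_inner_le_norm (u - u₀) (L v₀)
      have h2 : ‖L v₀‖ ≤ ‖L‖ := by simpa [hv₀] using L.le_opNorm v₀
      have h3 : ‖u - u₀‖ ≤ 1/4 := by rwa [norm_sub_rev] at huc
      nlinarith [norm_nonneg (u - u₀), norm_nonneg (L v₀), L.opNorm_nonneg]
    have b2 : |⟪u, L (v - v₀)⟫| ≤ (1/4) * ‖L‖ := by
      have h := abs_real_inner_le_norm u (L (v - v₀))
      have h2 : ‖L (v - v₀)‖ ≤ ‖L‖ * ‖v - v₀‖ := L.le_opNorm _
      have h3 : ‖v - v₀‖ ≤ 1/4 := by rwa [norm_sub_rev] at hvc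
      nlinarith [norm_nonneg (L (v - v₀)), L.opNorm_nonneg, norm_nonneg (v-v₀)]
    have : ‖L‖ ≤ ‖L v₀‖ := hLle
    have final : ‖L‖ / 2 ≤ ⟪u, L v⟫ := by
      rw [split, e1]
      have := abs_le.mp b1
      have := abs_le.mp b2
      linarith
    have : opnorm A = ‖L‖ := rfl
    have hLv : L v = (Matrix.toEuclideanLin A) v := rfl
    rw [this, ← hLv]
    linarith

lemma vnorm_eq_norm {d : ℕ} (u : EuclideanSpace ℝ (Fin d)) : vnorm (fun a => u a) = ‖u‖ := by
  rw [vnorm, EuclideanSpace.norm_eq]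
  congr 1
  exact Finset.sum_congr rfl (fun i _ => by rw [Real.norm_eq_abs, sq_abs])

lemma sum_sq_eq_one {d : ℕ} (u : EuclideanSpace ℝ (Fin d)) (h : ‖u‖ = 1) :
    ∑ i, (u i) ^ 2 = 1 := by
  have := vnorm_eq_norm u
  rw [h, vnorm] at this
  have h0 : (0:ℝ) ≤ ∑ i, (u i) ^ 2 := Finset.sum_nonneg (fun i _ => sq_nonneg _)
  nlinarith [Real.sq_sqrt h0]


/-- **Lemma 6 (operator norm of a matrix with independent sub-Gaussian columns).**
If the columns `ε_i` of `E ∈ ℝ^{p×n}` are independent `SG_p(σ²)` random vectors, then for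
every `t ≥ 2`, `P(‖E‖ ≥ 4tσ(√n + √p)) ≤ exp(−(t² − 3)n/2)`. -/
theorem subgaussian_matrix_opnorm
    (Ω : Type) [MeasurableSpace Ω] (μ : Measure Ω) [IsProbabilityMeasure μ]
    (p n : ℕ) (σ : ℝ) (hσ : 0 < σ)
    (ε : Fin n → Ω → Fin p → ℝ)
    (hmeas : ∀ i, Measurable (ε i))
    (hindep : iIndepFun ε μ)
    (hsg : ∀ i, IsSGVec μ (ε i) (σ ^ 2))
    (t : ℝ) (ht : 2 ≤ t) :
    μ {ω | 4 * t * σ * (Real.sqrt (n : ℝ) + Real.sqrt (p : ℝ)) ≤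
        opnorm (Matrix.of fun a i => ε i ω a)} ≤
      ENNReal.ofReal (Real.exp (-((t ^ 2 - 3) * (n : ℝ) / 2))) := by
  classical
  rcases Nat.eq_zero_or_pos n with hn0 | hn
  · rcases Nat.eq_zero_or_pos p with hp0 | hp
    · subst hn0
      refine le_trans (measure_mono (Set.subset_univ _)) ?_
      simp [measure_univ]
    · -- n = 0, p > 0 : domain trivial, opnorm = 0, threshold positive
      subst hn0
      haveI : Subsingleton (EuclideanSpace ℝ (Fin 0)) :=
        ⟨fun a b => PiLp.ext (fun i => Fin.elim0 i)⟩
      have hzero : ∀ ω, opnorm (Matrix.of fun a (i : Fin 0) => ε i ω a) = 0 := by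
        intro ω
        refine le_antisymm ?_ (norm_nonneg _)
        refine ContinuousLinearMap.opNorm_le_bound _ le_rfl (fun x => ?_)
        have hx : x = 0 := Subsingleton.elim x 0
        simp [hx]
      have hthr : 0 < 4 * t * σ * (Real.sqrt ((0:ℕ) : ℝ) + Real.sqrt (p : ℝ)) := by
        have : (0:ℝ) < Real.sqrt (p : ℝ) := Real.sqrt_pos.mpr (by exact_mod_cast hp)
        have ht0 : (0:ℝ) < t := lt_of_lt_of_le (by norm_num) ht
        simp only [Nat.cast_zero, Real.sqrt_zero, zero_add]
        positivity
      have hempty : {ω | 4 * t * σ * (Real.sqrt ((0:ℕ) : ℝ) + Real.sqrt (p : ℝ)) ≤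
          opnorm (Matrix.of fun a (i : Fin 0) => ε i ω a)} = ∅ := by
        ext ω; simp only [Set.mem_setOf_eq, Set.mem_empty_iff_false, iff_false, not_le, hzero ω]
        exact hthr
      rw [hempty, measure_empty]
      exact zero_le
  rcases Nat.eq_zero_or_pos p with hp0 | hp
  · -- p = 0 : codomain trivial
    subst hp0
    haveI : Subsingleton (EuclideanSpace ℝ (Fin 0)) :=
      ⟨fun a b => PiLp.ext (fun i => Fin.elim0 i)⟩
    have hzero : ∀ ω, opnorm (Matrix.of fun (a : Fin 0) i => ε i ω a) = 0 := by
      intro ω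
      refine le_antisymm ?_ (norm_nonneg _)
      refine ContinuousLinearMap.opNorm_le_bound _ le_rfl (fun x => ?_)
      have : (LinearMap.toContinuousLinearMap
          (Matrix.toEuclideanLin (Matrix.of fun (a : Fin 0) i => ε i ω a))) x = 0 :=
        Subsingleton.elim _ 0
      simp [this]
    have hthr : 0 < 4 * t * σ * (Real.sqrt (n : ℝ) + Real.sqrt ((0:ℕ) : ℝ)) := by
      have : (0:ℝ) < Real.sqrt (n : ℝ) := Real.sqrt_pos.mpr (by exact_mod_cast hn)
      have ht0 : (0:ℝ) < t := lt_of_lt_of_le (by norm_num) ht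
      simp only [Nat.cast_zero, Real.sqrt_zero, add_zero]
      positivity
    have hempty : {ω | 4 * t * σ * (Real.sqrt (n : ℝ) + Real.sqrt ((0:ℕ) : ℝ)) ≤
        opnorm (Matrix.of fun (a : Fin 0) i => ε i ω a)} = ∅ := by
      ext ω; simp only [Set.mem_setOf_eq, Set.mem_empty_iff_false, iff_false, not_le, hzero ω]
      exact hthr
    rw [hempty, measure_empty]
    exact zero_le
  -- main case
  obtain ⟨N, hN1, hNcard, hNnet⟩ := exists_net p
  obtain ⟨M, hM1, hMcard, hMnet⟩ := exists_net n
  set s : ℝ := 2 * t * σ * (Real.sqrt (n : ℝ) + Real.sqrt (p : ℝ)) with hs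
  have ht0 : (0:ℝ) < t := lt_of_lt_of_le (by norm_num) ht
  have hsqn : (0:ℝ) < Real.sqrt (n : ℝ) := Real.sqrt_pos.mpr (by exact_mod_cast hn)
  have hsqp : (0:ℝ) < Real.sqrt (p : ℝ) := Real.sqrt_pos.mpr (by exact_mod_cast hp)
  have hs0 : 0 ≤ s := by positivity
  set S : EuclideanSpace ℝ (Fin p) → EuclideanSpace ℝ (Fin n) → Set Ω := fun u v =>
    {ω | s ≤ ∑ i, v i * ∑ a, u a * ε i ω a} with hSdef
  have hsub : {ω | 4 * t * σ * (Real.sqrt (n : ℝ) + Real.sqrt (p : ℝ)) ≤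
      opnorm (Matrix.of fun a i => ε i ω a)} ⊆ ⋃ u ∈ N, ⋃ v ∈ M, S u v := by
    intro ω hω
    simp only [Set.mem_setOf_eq] at hω
    obtain ⟨u, huN, v, hvM, hle⟩ := opnorm_net hp hn (Matrix.of fun a i => ε i ω a)
      N M hN1 hM1 hNnet hMnet
    have hinner := inner_toEuc (Matrix.of fun a i => ε i ω a) u v
    simp only [Set.mem_iUnion]
    refine ⟨u, huN, v, hvM, ?_⟩
    simp only [hSdef, Set.mem_setOf_eq]
    have h2s : 2 * s = 4 * t * σ * (Real.sqrt (n : ℝ) + Real.sqrt (p : ℝ)) := by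
      rw [hs]; ring
    have : 2 * s ≤ 2 * ⟪u, (Matrix.toEuclideanLin (Matrix.of fun a i => ε i ω a)) v⟫ := by
      rw [h2s]; exact hω.trans hle
    have hfin : s ≤ ⟪u, (Matrix.toEuclideanLin (Matrix.of fun a i => ε i ω a)) v⟫ := by
      linarith
    rw [hinner] at hfin
    simpa using hfin
  have hone : ∀ u ∈ N, ∀ v ∈ M, μ (S u v) ≤
      ENNReal.ofReal (Real.exp (-(s ^ 2 / (2 * σ ^ 2)))) := by
    intro u huN v hvM
    have hu : vnorm (fun a => u a) = 1 := by rw [vnorm_eq_norm u, hN1 u huN]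
    have hv : ∑ i, (v i) ^ 2 = 1 := sum_sq_eq_one v (hM1 v hvM)
    exact chernoff μ σ hσ ε hmeas hindep hsg (fun a => u a) hu (fun i => v i) hv s hs0
  calc μ {ω | 4 * t * σ * (Real.sqrt (n : ℝ) + Real.sqrt (p : ℝ)) ≤
        opnorm (Matrix.of fun a i => ε i ω a)}
      ≤ μ (⋃ u ∈ N, ⋃ v ∈ M, S u v) := measure_mono hsub
    _ ≤ ∑ u ∈ N, μ (⋃ v ∈ M, S u v) := measure_biUnion_finset_le N _
    _ ≤ ∑ u ∈ N, ∑ v ∈ M, μ (S u v) :=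
        Finset.sum_le_sum (fun u _ => measure_biUnion_finset_le M _)
    _ ≤ ∑ u ∈ N, ∑ v ∈ M, ENNReal.ofReal (Real.exp (-(s ^ 2 / (2 * σ ^ 2)))) :=
        Finset.sum_le_sum (fun u hu => Finset.sum_le_sum (fun v hv => hone u hu v hv))
    _ = (N.card : ℝ≥0∞) * ((M.card : ℝ≥0∞) *
          ENNReal.ofReal (Real.exp (-(s ^ 2 / (2 * σ ^ 2))))) := by
        simp [Finset.sum_const, nsmul_eq_mul, mul_assoc]
    _ ≤ ENNReal.ofReal (Real.exp (-((t ^ 2 - 3) * (n : ℝ) / 2))) := by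
        rw [← ENNReal.ofReal_natCast N.card, ← ENNReal.ofReal_natCast M.card,
          ← ENNReal.ofReal_mul (by positivity), ← ENNReal.ofReal_mul (by positivity)]
        refine ENNReal.ofReal_le_ofReal ?_
        -- real arithmetic
        have hcardN : (N.card : ℝ) ≤ 9 ^ p := by exact_mod_cast hNcard
        have hcardM : (M.card : ℝ) ≤ 9 ^ n := by exact_mod_cast hMcard
        have hexp9 : (9:ℝ) ≤ Real.exp 3 := by
          have h1 : (2.7182818283 : ℝ) < Real.exp 1 := Real.exp_one_gt_d9
          have h3 : Real.exp 3 = (Real.exp 1) ^ 3 := by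
            rw [← Real.exp_nat_mul]; norm_num
          have h2 : (2.7:ℝ) ≤ Real.exp 1 := by linarith
          have h4 : (2.7:ℝ) ^ 3 ≤ (Real.exp 1) ^ 3 := pow_le_pow_left₀ (by norm_num) h2 3
          rw [h3]; nlinarith
        have hpow9 : ∀ k : ℕ, (9:ℝ) ^ k ≤ Real.exp (3 * k) := by
          intro k
          calc (9:ℝ) ^ k ≤ (Real.exp 3) ^ k := pow_le_pow_left₀ (by norm_num) hexp9 k
            _ = Real.exp (3 * k) := by rw [← Real.exp_nat_mul, mul_comm]
        have hR : (n : ℝ) + (p : ℝ) ≤ (Real.sqrt (n : ℝ) + Real.sqrt (p : ℝ)) ^ 2 := by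
          have h1 : Real.sqrt (n:ℝ) ^ 2 = (n:ℝ) := Real.sq_sqrt (Nat.cast_nonneg n)
          have h2 : Real.sqrt (p:ℝ) ^ 2 = (p:ℝ) := Real.sq_sqrt (Nat.cast_nonneg p)
          nlinarith [mul_nonneg hsqn.le hsqp.le]
        have hsq : s ^ 2 / (2 * σ ^ 2) = 2 * t ^ 2 * (Real.sqrt (n : ℝ) + Real.sqrt (p : ℝ)) ^ 2 := by
          rw [hs]; field_simp
        have hexple : Real.exp (-(s ^ 2 / (2 * σ ^ 2))) ≤
            Real.exp (-(2 * t ^ 2 * ((n:ℝ) + (p:ℝ)))) := by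
          rw [hsq]
          apply Real.exp_le_exp.mpr
          have ht2 : (0:ℝ) ≤ 2 * t ^ 2 := by positivity
          nlinarith
        calc (N.card : ℝ) * ((M.card : ℝ) * Real.exp (-(s ^ 2 / (2 * σ ^ 2))))
            ≤ (9:ℝ) ^ p * ((9:ℝ) ^ n * Real.exp (-(2 * t ^ 2 * ((n:ℝ) + (p:ℝ))))) := by
              have e0 : (0:ℝ) ≤ Real.exp (-(s ^ 2 / (2 * σ ^ 2))) := Real.exp_nonneg _
              have c0 : (0:ℝ) ≤ (M.card : ℝ) := Nat.cast_nonneg _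
              have c1 : (0:ℝ) ≤ (N.card : ℝ) := Nat.cast_nonneg _
              have h9p : (0:ℝ) ≤ (9:ℝ)^p := by positivity
              have h9n : (0:ℝ) ≤ (9:ℝ)^n := by positivity
              apply mul_le_mul hcardN _ (by positivity) h9p
              exact mul_le_mul hcardM hexple e0 h9n
          _ ≤ Real.exp (3 * p) * (Real.exp (3 * n) * Real.exp (-(2 * t ^ 2 * ((n:ℝ) + (p:ℝ))))) := by
              have := hpow9 p
              have := hpow9 n
              have e0 : (0:ℝ) ≤ Real.exp (-(2 * t ^ 2 * ((n:ℝ) + (p:ℝ)))) := Real.exp_nonneg _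
              apply mul_le_mul (hpow9 p) _ (by positivity) (Real.exp_nonneg _)
              exact mul_le_mul (hpow9 n) le_rfl e0 (Real.exp_nonneg _)
          _ = Real.exp (3 * p + 3 * n - 2 * t ^ 2 * ((n:ℝ) + (p:ℝ))) := by
              rw [← Real.exp_add, ← Real.exp_add]; ring_nf
          _ ≤ Real.exp (-((t ^ 2 - 3) * (n : ℝ) / 2)) := by
              apply Real.exp_le_exp.mpr
              have hn1 : (0:ℝ) ≤ (n:ℝ) := Nat.cast_nonneg n
              have hp1 : (0:ℝ) ≤ (p:ℝ) := Nat.cast_nonneg p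
              have ht2 : (4:ℝ) ≤ t ^ 2 := by nlinarith
              nlinarith [mul_nonneg hp1 (by nlinarith : (0:ℝ) ≤ 2 * t ^ 2 - 3),
                mul_nonneg hn1 (by nlinarith : (0:ℝ) ≤ 3 * t ^ 2 - 3)]
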